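/- arXiv:1805.09517 — 5 statements merged into one kernel-verified Lean document; each statement's English description precedes it below -/
import Mathlib

section
/- Let $A$ be a commutative ring, $c > 0$ an odd integer, and $R = A[q^{\pm 1}]$ the Laurent polynomial ring over $A$. Suppose $f \in R$ is supported entirely on even exponents or entirely on odd exponents (i.e., every exponent occurring in $f$ with nonzero coefficient is even, or every such exponent is odd). If $f$ lies in the ideal generated by $q^{c} - 1$, then $f$ lies in the ideal generated by $q^{c} + 1$. -/
open LaurentPolynomial

/-- The unit `T 1` of the Laurent polynomial ring. -/
noncomputable def TUnit (A : Type*) [CommRing A] : (A[T;T⁻¹])ˣ :=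
  ⟨T 1, T (-1), by rw [← T_add]; norm_num [T_zero], by rw [← T_add]; norm_num [T_zero]⟩

lemma TUnit_zpow (A : Type*) [CommRing A] (n : ℤ) :
    ((TUnit A ^ n : (A[T;T⁻¹])ˣ) : A[T;T⁻¹]) = T n := by
  induction n using Int.induction_on with
  | zero => simp [T_zero]
  | succ k ih =>
      rw [zpow_add_one, Units.val_mul, ih, show ((k : ℤ) + 1) = k + 1 from rfl, T_add]
      rfl
  | pred k ih =>
      rw [zpow_sub_one, Units.val_mul, ih, T_sub]
      rfl

lemma negTUnit_zpow_even (A : Type*) [CommRing A] {n : ℤ} (hn : Even n) :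
    (((-TUnit A) ^ n : (A[T;T⁻¹])ˣ) : A[T;T⁻¹]) = T n := by
  obtain ⟨k, rfl⟩ := hn
  have h2 : (-TUnit A) ^ (2 : ℤ) = TUnit A ^ (2 : ℤ) := by
    rw [show (2 : ℤ) = ((2 : ℕ) : ℤ) from rfl, zpow_natCast, zpow_natCast, neg_sq]
  rw [show k + k = 2 * k by ring, zpow_mul, h2, ← zpow_mul, TUnit_zpow]

lemma negTUnit_zpow_odd (A : Type*) [CommRing A] {n : ℤ} (hn : Odd n) :
    (((-TUnit A) ^ n : (A[T;T⁻¹])ˣ) : A[T;T⁻¹]) = -T n := by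
  obtain ⟨k, rfl⟩ := hn
  rw [zpow_add, zpow_one, Units.val_mul, negTUnit_zpow_even A (even_two_mul k), Units.val_neg,
    mul_neg]
  have : ((TUnit A : (A[T;T⁻¹])ˣ) : A[T;T⁻¹]) = T 1 := rfl
  rw [this, ← T_add]

/-- The ring endomorphism of `A[T;T⁻¹]` sending `T` to `-T`. -/
noncomputable def sigmaHom (A : Type*) [CommRing A] : A[T;T⁻¹] →+* A[T;T⁻¹] :=
  AddMonoidAlgebra.liftNCRingHom (C : A →+* A[T;T⁻¹])
    ((Units.coeHom _).comp (zpowersHom _ (-TUnit A))) (fun _ _ => Commute.all _ _)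

lemma sigmaHom_single (A : Type*) [CommRing A] (n : ℤ) (a : A) :
    sigmaHom A (AddMonoidAlgebra.single n a) = C a * (((-TUnit A) ^ n : (A[T;T⁻¹])ˣ) : A[T;T⁻¹]) := by
  have : sigmaHom A (AddMonoidAlgebra.single n a) =
      AddMonoidAlgebra.liftNC ((C : A →+* A[T;T⁻¹]) : A →+ A[T;T⁻¹])
        ((Units.coeHom _).comp (zpowersHom _ (-TUnit A))) (AddMonoidAlgebra.single n a) := rfl
  rw [this, AddMonoidAlgebra.liftNC_single]
  simp

lemma sigmaHom_single_even (A : Type*) [CommRing A] {n : ℤ} (hn : Even n) (a : A) :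
    sigmaHom A (AddMonoidAlgebra.single n a) = AddMonoidAlgebra.single n a := by
  rw [sigmaHom_single, negTUnit_zpow_even A hn, ← single_eq_C_mul_T]

lemma sigmaHom_single_odd (A : Type*) [CommRing A] {n : ℤ} (hn : Odd n) (a : A) :
    sigmaHom A (AddMonoidAlgebra.single n a) = -AddMonoidAlgebra.single n a := by
  rw [sigmaHom_single, negTUnit_zpow_odd A hn, mul_neg, ← single_eq_C_mul_T]

lemma sigmaHom_T_odd (A : Type*) [CommRing A] {n : ℤ} (hn : Odd n) :
    sigmaHom A (T n) = -T n :=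
  sigmaHom_single_odd A hn 1

/-- Let `A` be a commutative ring and `c > 0` an odd integer. If `f ∈ A[q^{±1}]` is
supported entirely on even exponents or entirely on odd exponents, and `f` lies in the
ideal generated by `q^c - 1`, then `f` lies in the ideal generated by `q^c + 1`. -/
theorem stmt_1 (A : Type*) [CommRing A] (c : ℤ) (hc : 0 < c) (hodd : Odd c)
    (f : A[T;T⁻¹])
    (hf : (∀ i ∈ f.coeff.support, Even i) ∨ (∀ i ∈ f.coeff.support, Odd i))
    (hmem : f ∈ Ideal.span {(T c - 1 : A[T;T⁻¹])}) :
    f ∈ Ideal.span {(T c + 1 : A[T;T⁻¹])} := by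
  rw [Ideal.mem_span_singleton] at hmem ⊢
  obtain ⟨g, hg⟩ := hmem
  have hσsub : sigmaHom A (T c - 1) = -(T c + 1) := by
    rw [map_sub, map_one, sigmaHom_T_odd A hodd]; ring
  have hσf : sigmaHom A f = -(T c + 1) * sigmaHom A g := by
    rw [hg, map_mul, hσsub]
  rcases hf with h | h
  · -- even support : sigmaHom A f = f
    have : sigmaHom A f = f := by
      conv_lhs => rw [← AddMonoidAlgebra.sum_coeff_single f]
      rw [map_finsuppSum]
      have hsum : (f.coeff.sum fun n a => sigmaHom A (AddMonoidAlgebra.single n a))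
          = f.coeff.sum fun n a => AddMonoidAlgebra.single n a :=
        Finsupp.sum_congr fun n hn => sigmaHom_single_even A (h n hn) (f.coeff n)
      rw [hsum, AddMonoidAlgebra.sum_coeff_single]
    rw [this] at hσf
    exact ⟨-sigmaHom A g, by rw [hσf]; ring⟩
  · -- odd support : sigmaHom A f = -f
    have : sigmaHom A f = -f := by
      conv_lhs => rw [← AddMonoidAlgebra.sum_coeff_single f]
      rw [map_finsuppSum]
      have hsum : (f.coeff.sum fun n a => sigmaHom A (AddMonoidAlgebra.single n a))
          = f.coeff.sum fun n a => -AddMonoidAlgebra.single n a :=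
        Finsupp.sum_congr fun n hn => sigmaHom_single_odd A (h n hn) (f.coeff n)
      rw [hsum, Finsupp.sum, Finset.sum_neg_distrib, ← Finsupp.sum, AddMonoidAlgebra.sum_coeff_single]
    rw [this] at hσf
    exact ⟨sigmaHom A g, by linear_combination -hσf⟩
end

section
/- Let $A$ be a commutative ring, $c > 0$ an odd integer, and $R = A[q^{\pm 1}]$ the Laurent polynomial ring over $A$. Suppose $f \in R$ is supported entirely on even exponents or entirely on odd exponents. If $f$ lies in the ideal generated by $q^{c} - 1$, then $f$ lies in the ideal generated by $q^{2c} - 1$. -/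
open LaurentPolynomial

/-- Coefficient of a Laurent polynomial, viewed as a `Finsupp`. -/
private def lcoeff {A : Type*} [CommRing A] (p : A[T;T⁻¹]) : ℤ →₀ A := p.coeff

/-- A `Finsupp` viewed as a Laurent polynomial. -/
private def ofFn {A : Type*} [CommRing A] (p : ℤ →₀ A) : A[T;T⁻¹] := AddMonoidAlgebra.ofCoeff p

private lemma coeff_mul_T_sub_one {A : Type*} [CommRing A] (g : A[T;T⁻¹]) (c n : ℤ) :
    lcoeff (g * (T c - 1)) n = lcoeff g (n - c) - lcoeff g n := by
  have h1 : g * (T c - 1) = g * T c - g := by ring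
  rw [h1]
  show (g * (T c : A[T;T⁻¹]) - g).coeff n = _
  rw [AddMonoidAlgebra.coeff_sub, Finsupp.sub_apply]
  have : (g * (T c : A[T;T⁻¹])).coeff n = g.coeff (n - c) * 1 :=
    AddMonoidAlgebra.coeff_mul_single_apply g 1 c n
  rw [this, mul_one]
  rfl

/-- Let `A` be a commutative ring and `c > 0` an odd integer. If `f ∈ A[q^{±1}]` is
supported entirely on even exponents or entirely on odd exponents, and `f` lies in the
ideal generated by `q^c - 1`, then `f` lies in the ideal generated by `q^{2c} - 1`. -/
theorem stmt_2 (A : Type*) [CommRing A] (c : ℤ) (hc : 0 < c) (hodd : Odd c)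
    (f : A[T;T⁻¹])
    (hf : (∀ i ∈ f.coeff.support, Even i) ∨ (∀ i ∈ f.coeff.support, Odd i))
    (hmem : f ∈ Ideal.span {(T c - 1 : A[T;T⁻¹])}) :
    f ∈ Ideal.span {(T (2 * c) - 1 : A[T;T⁻¹])} := by
  classical
  obtain ⟨k, hk⟩ := hodd
  obtain ⟨g, hg⟩ := Ideal.mem_span_singleton'.mp hmem
  rw [Ideal.mem_span_singleton']
  rcases hf with hf | hf
  · -- f supported on even exponents
    have hzero : ∀ n : ℤ, Odd n → lcoeff f n = 0 := by
      intro n hn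
      by_contra h
      obtain ⟨m, hm⟩ := hf n (Finsupp.mem_support_iff.mpr h)
      obtain ⟨l, hl⟩ := hn
      omega
    have hrel : ∀ n : ℤ, Odd n → lcoeff g (n - c) = lcoeff g n := by
      intro n hn
      have h0 : lcoeff g (n - c) - lcoeff g n = 0 := by
        rw [← coeff_mul_T_sub_one, hg, hzero n hn]
      exact sub_eq_zero.mp h0
    refine ⟨ofFn ((lcoeff g).filter (fun i => Even i)), ?_⟩
    rw [← hg]
    apply AddMonoidAlgebra.coeff_injective
    apply Finsupp.ext
    intro n
    show lcoeff (ofFn ((lcoeff g).filter (fun i => Even i)) * (T (2 * c) - 1)) n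
        = lcoeff (g * (T c - 1)) n
    rw [coeff_mul_T_sub_one, coeff_mul_T_sub_one]
    have hfil : lcoeff (ofFn ((lcoeff g).filter (fun i => Even i))) = fun m =>
        ((lcoeff g).filter (fun i => Even i)) m := rfl
    by_cases hn : Even n
    · obtain ⟨m, hm⟩ := hn
      have h1 : Even (n - 2 * c) := ⟨m - c, by omega⟩
      have h2 : Odd (n - c) := ⟨m - k - 1, by omega⟩
      show ((lcoeff g).filter (fun i => Even i)) (n - 2 * c)
          - ((lcoeff g).filter (fun i => Even i)) n = _
      rw [Finsupp.filter_apply_pos _ _ h1, Finsupp.filter_apply_pos _ _ ⟨m, hm⟩]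
      have := hrel (n - c) h2
      have hnc : n - c - c = n - 2 * c := by ring
      rw [hnc] at this
      rw [this]
    · have hodd_n : Odd n := Int.not_even_iff_odd.mp hn
      have h1 : ¬ Even (n - 2 * c) := by
        intro ⟨m, hm⟩; obtain ⟨l, hl⟩ := hodd_n; omega
      show ((lcoeff g).filter (fun i => Even i)) (n - 2 * c)
          - ((lcoeff g).filter (fun i => Even i)) n = _
      rw [Finsupp.filter_apply_neg _ _ h1, Finsupp.filter_apply_neg _ _ hn]
      rw [hrel n hodd_n]
      ring
  · -- f supported on odd exponents
    have hzero : ∀ n : ℤ, Even n → lcoeff f n = 0 := by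
      intro n hn
      by_contra h
      obtain ⟨m, hm⟩ := hf n (Finsupp.mem_support_iff.mpr h)
      obtain ⟨l, hl⟩ := hn
      omega
    have hrel : ∀ n : ℤ, Even n → lcoeff g (n - c) = lcoeff g n := by
      intro n hn
      have h0 : lcoeff g (n - c) - lcoeff g n = 0 := by
        rw [← coeff_mul_T_sub_one, hg, hzero n hn]
      exact sub_eq_zero.mp h0
    refine ⟨ofFn ((lcoeff g).filter (fun i => Odd i)), ?_⟩
    rw [← hg]
    apply AddMonoidAlgebra.coeff_injective
    apply Finsupp.ext
    intro n
    show lcoeff (ofFn ((lcoeff g).filter (fun i => Odd i)) * (T (2 * c) - 1)) n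
        = lcoeff (g * (T c - 1)) n
    rw [coeff_mul_T_sub_one, coeff_mul_T_sub_one]
    by_cases hn : Odd n
    · obtain ⟨m, hm⟩ := hn
      have h1 : Odd (n - 2 * c) := ⟨m - c, by omega⟩
      have h2 : Even (n - c) := ⟨m - k, by omega⟩
      show ((lcoeff g).filter (fun i => Odd i)) (n - 2 * c)
          - ((lcoeff g).filter (fun i => Odd i)) n = _
      rw [Finsupp.filter_apply_pos _ _ h1, Finsupp.filter_apply_pos _ _ ⟨m, hm⟩]
      have := hrel (n - c) h2
      have hnc : n - c - c = n - 2 * c := by ring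
      rw [hnc] at this
      rw [this]
    · have heven_n : Even n := Int.not_odd_iff_even.mp hn
      have h1 : ¬ Odd (n - 2 * c) := by
        intro ⟨m, hm⟩; obtain ⟨l, hl⟩ := heven_n; omega
      show ((lcoeff g).filter (fun i => Odd i)) (n - 2 * c)
          - ((lcoeff g).filter (fun i => Odd i)) n = _
      rw [Finsupp.filter_apply_neg _ _ h1, Finsupp.filter_apply_neg _ _ hn]
      rw [hrel n heven_n]
      ring
end

section
/- Let $p$ be an odd prime and $R = \mathbb{Z}[q^{\pm 1}]$. Suppose $f \in R$ is supported entirely on even exponents or entirely on odd exponents. If $f$ lies in the ideal $(p, q^{p} - 1)$ generated by $p$ and $q^{p} - 1$, then $f$ lies in the ideal $(p, q^{p} + 1)$ generated by $p$ and $q^{p} + 1$. -/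
open LaurentPolynomial


noncomputable def vT : (ℤ[T;T⁻¹])ˣ :=
  ⟨T 1, T (-1), by rw [← T_add]; norm_num, by rw [← T_add]; norm_num⟩

lemma vT_zpow (i : ℤ) : ((vT ^ i : (ℤ[T;T⁻¹])ˣ) : ℤ[T;T⁻¹]) = T i := by
  induction i using Int.induction_on with
  | zero => simp [T_zero]
  | succ n ih => rw [zpow_add_one, Units.val_mul, ih]; show _ = T (n + 1); rw [T_add]; rfl
  | pred n ih => rw [zpow_sub_one, Units.val_mul, ih]; show _ = T (-n - 1); rw [T_sub]; rfl

lemma neg_one_zpow_odd {i : ℤ} (ho : Odd i) : ((-1 : (ℤ[T;T⁻¹])ˣ) ^ i) = -1 := by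
  obtain ⟨c, rfl⟩ := ho
  rw [zpow_add_one, Even.neg_one_zpow (even_two_mul c), one_mul]

noncomputable def sg : ℤ[T;T⁻¹] →ₐ[ℤ] ℤ[T;T⁻¹] :=
  AddMonoidAlgebra.lift ℤ _ ℤ ((Units.coeHom _).comp (zpowersHom _ (-vT)))

lemma smul_T (i a : ℤ) : a • (T i : ℤ[T;T⁻¹]) = AddMonoidAlgebra.single i a := by
  show a • (AddMonoidAlgebra.single i (1:ℤ)) = _
  rw [AddMonoidAlgebra.smul_single, smul_eq_mul, mul_one]

lemma sg_single (i : ℤ) (a : ℤ) :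
    sg (AddMonoidAlgebra.single i a) = if Even i then AddMonoidAlgebra.single i a else -AddMonoidAlgebra.single i a := by
  have h1 : sg (AddMonoidAlgebra.single i a) = a • (((-vT) ^ i : (ℤ[T;T⁻¹])ˣ) : ℤ[T;T⁻¹]) := by
    rw [sg, AddMonoidAlgebra.lift_single]; rfl
  have h2 : ((-vT) ^ i : (ℤ[T;T⁻¹])ˣ) = (-1) ^ i * vT ^ i := by
    rw [← neg_one_mul, mul_zpow]
  rcases Int.even_or_odd i with he | ho
  · rw [if_pos he, h1, h2, he.neg_one_zpow, one_mul, vT_zpow, smul_T]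
  · rw [if_neg (by simpa [Int.not_even_iff_odd] using ho), h1, h2, neg_one_zpow_odd ho,
      neg_one_mul, Units.val_neg, vT_zpow, smul_neg, smul_T]

/-- Let `p` be an odd prime. If `f ∈ ℤ[q^{±1}]` is supported entirely on even exponents
or entirely on odd exponents, and `f ∈ (p, q^p - 1)`, then `f ∈ (p, q^p + 1)`. -/
theorem stmt_3 (p : ℕ) (hp : p.Prime) (hodd : Odd p)
    (f : ℤ[T;T⁻¹])
    (hf : (∀ i ∈ f.coeff.support, Even i) ∨ (∀ i ∈ f.coeff.support, Odd i))
    (hmem : f ∈ Ideal.span {(p : ℤ[T;T⁻¹]), T (p : ℤ) - 1}) :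
    f ∈ Ideal.span {(p : ℤ[T;T⁻¹]), T (p : ℤ) + 1} := by
  have hTp : sg (T (p : ℤ)) = - T (p : ℤ) := by
    have h0 : (T (p : ℤ) : ℤ[T;T⁻¹]) = AddMonoidAlgebra.single (p : ℤ) 1 := rfl
    rw [h0, sg_single, if_neg (by simpa [Int.not_even_iff_odd] using (Int.odd_coe_nat p).2 hodd)]
  have hmap : sg f ∈ Ideal.span {(p : ℤ[T;T⁻¹]), T (p : ℤ) + 1} := by
    have h1 : sg f ∈ Ideal.map (sg : ℤ[T;T⁻¹] →+* ℤ[T;T⁻¹])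
        (Ideal.span {(p : ℤ[T;T⁻¹]), T (p : ℤ) - 1}) := Ideal.mem_map_of_mem _ hmem
    rw [Ideal.map_span] at h1
    refine Ideal.span_le.2 ?_ h1
    rintro x ⟨y, hy, rfl⟩
    rcases hy with rfl | rfl
    · rw [map_natCast]
      exact Ideal.subset_span (Or.inl rfl)
    · rw [map_sub, map_one]
      have h3 : (sg : ℤ[T;T⁻¹] →+* ℤ[T;T⁻¹]) (T (p:ℤ)) = - T (p:ℤ) := hTp
      rw [h3]
      have h2 : (-T (p:ℤ) - 1 : ℤ[T;T⁻¹]) = -(T (p:ℤ) + 1) := by ring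
      rw [h2]
      exact neg_mem (Ideal.subset_span (Or.inr rfl))
  have hsum : sg f = ∑ i ∈ f.coeff.support, sg (AddMonoidAlgebra.single i (f.coeff i)) := by
    conv_lhs => rw [← AddMonoidAlgebra.sum_coeff_single f]
    rw [Finsupp.sum, map_sum]
  have key : sg f = f ∨ sg f = -f := by
    rcases hf with h | h
    · left
      rw [hsum, Finset.sum_congr rfl (fun i hi => by rw [sg_single, if_pos (h i hi)])]
      exact f.sum_coeff_single
    · right
      rw [hsum, Finset.sum_congr rfl
        (fun i hi => by rw [sg_single, if_neg (by simpa [Int.not_even_iff_odd] using h i hi)]),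
        Finset.sum_neg_distrib]
      exact congrArg Neg.neg f.sum_coeff_single
  rcases key with h | h
  · rwa [h] at hmap
  · rw [h] at hmap; simpa using neg_mem hmap
end

section
/- Let $p$ be an odd prime and $R = \mathbb{Z}[q^{\pm 1}]$. Suppose $f \in R$ is supported entirely on even exponents or entirely on odd exponents. If $f$ lies in the ideal $(p, q^{p} - 1)$ generated by $p$ and $q^{p} - 1$, then $f$ lies in the ideal $(p, q^{2p} - 1)$ generated by $p$ and $q^{2p} - 1$. -/
open LaurentPolynomial

lemma odd_units_neg_one_zpow {G : Type*} [Group G] [HasDistribNeg G] {n : ℤ} (h : Odd n) :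
    (-1 : G) ^ n = -1 := by
  obtain ⟨k, rfl⟩ := h
  rw [zpow_add, zpow_one, Even.neg_one_zpow ⟨k, two_mul k⟩, one_mul]

/-- The unit `T 1` of `ℤ[T;T⁻¹]`. -/
noncomputable def uT : (ℤ[T;T⁻¹])ˣ :=
  ⟨T 1, T (-1), by rw [← T_add]; norm_num [T_zero], by rw [← T_add]; norm_num [T_zero]⟩

lemma uT_zpow (n : ℤ) : ((uT ^ n : (ℤ[T;T⁻¹])ˣ) : ℤ[T;T⁻¹]) = T n := by
  induction n using Int.induction_on with
  | zero => simp [T_zero]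
  | succ k ih => rw [zpow_add_one, Units.val_mul, ih]; show _ * uT.val = _; rw [uT, ← T_add]
  | pred k ih =>
      rw [zpow_sub_one, Units.val_mul, ih]
      show _ * uT.inv = _
      rw [uT, ← T_add]
      norm_num
      congr 1

/-- The ring map `T ↦ -T`. -/
noncomputable def sigma : ℤ[T;T⁻¹] →ₐ[ℤ] ℤ[T;T⁻¹] :=
  AddMonoidAlgebra.lift ℤ _ ℤ ((Units.coeHom _).comp (zpowersHom _ (-uT)))

lemma sigma_single (n : ℤ) (a : ℤ) :
    sigma (AddMonoidAlgebra.single n a) = a • (((-uT) ^ n : (ℤ[T;T⁻¹])ˣ) : ℤ[T;T⁻¹]) := by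
  rw [sigma, AddMonoidAlgebra.lift_single]
  rfl

lemma neg_uT_zpow (n : ℤ) :
    (((-uT) ^ n : (ℤ[T;T⁻¹])ˣ) : ℤ[T;T⁻¹]) = (((-1 : (ℤ[T;T⁻¹])ˣ) ^ n : (ℤ[T;T⁻¹])ˣ) : ℤ[T;T⁻¹]) * T n := by
  rw [← uT_zpow n, ← Units.val_mul, ← mul_zpow, neg_one_mul]

lemma sigma_single_even {n : ℤ} (hn : Even n) (a : ℤ) :
    sigma (AddMonoidAlgebra.single n a) = AddMonoidAlgebra.single n a := by
  rw [sigma_single, neg_uT_zpow, hn.neg_one_zpow]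
  simp [single_eq_C_mul_T]

lemma sigma_single_odd {n : ℤ} (hn : Odd n) (a : ℤ) :
    sigma (AddMonoidAlgebra.single n a) = -AddMonoidAlgebra.single n a := by
  rw [sigma_single, neg_uT_zpow, odd_units_neg_one_zpow hn]
  simp [single_eq_C_mul_T]

lemma sigma_even {f : ℤ[T;T⁻¹]} (hf : ∀ i ∈ f.coeff.support, Even i) : sigma f = f := by
  conv_lhs => rw [← AddMonoidAlgebra.sum_coeff_single f]
  rw [map_finsuppSum]
  conv_rhs => rw [← AddMonoidAlgebra.sum_coeff_single f]
  exact Finsupp.sum_congr fun i hi => sigma_single_even (hf i hi) _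

lemma sigma_odd {f : ℤ[T;T⁻¹]} (hf : ∀ i ∈ f.coeff.support, Odd i) : sigma f = -f := by
  conv_lhs => rw [← AddMonoidAlgebra.sum_coeff_single f]
  rw [map_finsuppSum]
  conv_rhs => rw [← AddMonoidAlgebra.sum_coeff_single f]
  rw [← Finsupp.sum_neg]
  exact Finsupp.sum_congr fun i hi => sigma_single_odd (hf i hi) _

lemma sigma_T_odd {n : ℤ} (hn : Odd n) : sigma (T n) = -T n := by
  have h : (T n : ℤ[T;T⁻¹]) = AddMonoidAlgebra.single n 1 := rfl
  conv_lhs => rw [h]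
  rw [sigma_single, neg_uT_zpow, odd_units_neg_one_zpow hn]
  simp

/-- Let `p` be an odd prime. If `f ∈ ℤ[q^{±1}]` is supported entirely on even exponents
or entirely on odd exponents, and `f ∈ (p, q^p - 1)`, then `f ∈ (p, q^{2p} - 1)`. -/
theorem stmt_4 (p : ℕ) (hp : p.Prime) (hodd : Odd p)
    (f : ℤ[T;T⁻¹])
    (hf : (∀ i ∈ f.coeff.support, Even i) ∨ (∀ i ∈ f.coeff.support, Odd i))
    (hmem : f ∈ Ideal.span {(p : ℤ[T;T⁻¹]), T (p : ℤ) - 1}) :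
    f ∈ Ideal.span {(p : ℤ[T;T⁻¹]), T (2 * (p : ℤ)) - 1} := by
  set I := Ideal.span {(p : ℤ[T;T⁻¹]), T (2 * (p : ℤ)) - 1} with hI
  obtain ⟨a, b, hab⟩ := Ideal.mem_span_pair.mp hmem
  have hoddz : Odd (p : ℤ) := by exact_mod_cast hodd
  have hsTp : sigma (T (p : ℤ)) = -T (p : ℤ) := sigma_T_odd hoddz
  have h2 : (T (p:ℤ) : ℤ[T;T⁻¹]) * T (p:ℤ) = T (2 * (p:ℤ)) := by
    rw [← T_add]; ring_nf
  -- apply sigma to hab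
  have hsig : sigma a * (p : ℤ[T;T⁻¹]) + sigma b * (-T (p:ℤ) - 1) = sigma f := by
    have := congrArg sigma hab
    simpa only [map_add, map_mul, map_natCast, map_sub, map_one, hsTp] using this
  -- f ∈ span {p, T p + 1} : get c d with c * p + d * (T p + 1) = f
  have hcd : ∃ c d : ℤ[T;T⁻¹], c * (p : ℤ[T;T⁻¹]) + d * (T (p:ℤ) + 1) = f := by
    rcases hf with he | ho
    · refine ⟨sigma a, -sigma b, ?_⟩
      rw [sigma_even he] at hsig
      linear_combination hsig
    · refine ⟨-sigma a, sigma b, ?_⟩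
      rw [sigma_odd ho] at hsig
      linear_combination -hsig
  obtain ⟨c, d, hcd⟩ := hcd
  have hpI : (p : ℤ[T;T⁻¹]) ∈ I := Ideal.subset_span (Set.mem_insert _ _)
  have hTI : (T (2 * (p:ℤ)) - 1 : ℤ[T;T⁻¹]) ∈ I :=
    Ideal.subset_span (Set.mem_insert_of_mem _ rfl)
  have h1 : (T (p:ℤ) + 1) * f ∈ I := by
    have : (T (p:ℤ) + 1) * f = ((T (p:ℤ) + 1) * a) * (p : ℤ[T;T⁻¹]) + b * (T (2 * (p:ℤ)) - 1) := by
      linear_combination (T (p:ℤ) + 1) * hab.symm + b * h2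
    rw [this]
    exact I.add_mem (I.mul_mem_left _ hpI) (I.mul_mem_left _ hTI)
  have h2' : (T (p:ℤ) - 1) * f ∈ I := by
    have : (T (p:ℤ) - 1) * f = ((T (p:ℤ) - 1) * c) * (p : ℤ[T;T⁻¹]) + d * (T (2 * (p:ℤ)) - 1) := by
      linear_combination (T (p:ℤ) - 1) * hcd.symm + d * h2
    rw [this]
    exact I.add_mem (I.mul_mem_left _ hpI) (I.mul_mem_left _ hTI)
  have h2f : (2 : ℤ[T;T⁻¹]) * f ∈ I := by
    have : (2 : ℤ[T;T⁻¹]) * f = (T (p:ℤ) + 1) * f - (T (p:ℤ) - 1) * f := by ring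
    rw [this]
    exact I.sub_mem h1 h2'
  have hpf : (p : ℤ[T;T⁻¹]) * f ∈ I := I.mul_mem_right f hpI
  obtain ⟨k, hk⟩ := hodd
  have : f = (p : ℤ[T;T⁻¹]) * f - (k : ℤ[T;T⁻¹]) * ((2 : ℤ[T;T⁻¹]) * f) := by
    have hpk : (p : ℤ[T;T⁻¹]) = 2 * (k : ℤ[T;T⁻¹]) + 1 := by exact_mod_cast congrArg (Nat.cast : ℕ → ℤ[T;T⁻¹]) hk
    rw [hpk]; ring
  rw [this]
  exact I.sub_mem hpf (I.mul_mem_left _ h2f)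
end

section
/- Let $A$ be a commutative ring, $c > 0$ an odd integer, and let $f \in A[q^{\pm 1}]$ be supported entirely on even exponents or entirely on odd exponents. If $f = g \cdot (q^{c} - 1)$ for some $g \in A[q^{\pm 1}]$, then there exists $h \in A[q^{\pm 1}]$ with $f = h \cdot (q^{c} - 1)(q^{c} + 1)$; that is, $f$ is divisible by $q^{2c} - 1$ in $A[q^{\pm 1}]$. -/
open LaurentPolynomial

/-- Let `A` be a commutative ring and `c > 0` an odd integer. If `f ∈ A[q^{±1}]` is
supported entirely on even exponents or entirely on odd exponents and
`f = g * (q^c - 1)` for some `g`, then `f = h * (q^c - 1) * (q^c + 1)` for some `h`;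
that is, `f` is divisible by `q^{2c} - 1`. -/
theorem stmt_11 (A : Type*) [CommRing A] (c : ℤ) (hc : 0 < c) (hodd : Odd c)
    (f : A[T;T⁻¹])
    (hf : (∀ i ∈ f.coeff.support, Even i) ∨ (∀ i ∈ f.coeff.support, Odd i))
    (g : A[T;T⁻¹]) (hfg : f = g * (T c - 1)) :
    ∃ h : A[T;T⁻¹], f = h * ((T c - 1) * (T c + 1)) := by
  have hT2 : ((T c - 1) * (T c + 1) : A[T;T⁻¹]) = T (2 * c) - 1 := by
    have h1 : (T c * T c : A[T;T⁻¹]) = T (2 * c) := by rw [← T_add, two_mul]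
    rw [← h1]; ring
  have key : ∀ i : ℤ, f.coeff i = g.coeff (i - c) - g.coeff i := by
    intro i
    have hfg' : f = g * T c - g := by rw [hfg]; ring
    rw [hfg']
    have : ((g * T c : A[T;T⁻¹])).coeff i = g.coeff (i - c) * 1 :=
      AddMonoidAlgebra.coeff_mul_single_apply g 1 c i
    rw [AddMonoidAlgebra.coeff_sub, Finsupp.sub_apply, this, mul_one]
  -- a generic product formula
  have prod_apply : ∀ (h : A[T;T⁻¹]) (i : ℤ),
      ((h * (T (2 * c) - 1) : A[T;T⁻¹])).coeff i = h.coeff (i - 2 * c) - h.coeff i := by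
    intro h i
    have hh : h * (T (2 * c) - 1) = h * T (2 * c) - h := by ring
    rw [hh]
    have : ((h * T (2 * c) : A[T;T⁻¹])).coeff i = h.coeff (i - 2 * c) * 1 :=
      AddMonoidAlgebra.coeff_mul_single_apply h 1 (2 * c) i
    rw [AddMonoidAlgebra.coeff_sub, Finsupp.sub_apply, this, mul_one]
  obtain ⟨k, hk⟩ := hodd
  rcases hf with hf | hf
  · -- f even-supported; for odd i, f i = 0, so g (i - c) = g i
    have hz : ∀ i : ℤ, ¬ Even i → f.coeff i = 0 := by
      intro i hi
      by_contra h0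
      exact hi (hf i (Finsupp.mem_support_iff.mpr h0))
    have hrel : ∀ i : ℤ, ¬ Even i → g.coeff (i - c) = g.coeff i := by
      intro i hi
      have := key i
      rw [hz i hi] at this
      exact sub_eq_zero.mp this.symm
    refine ⟨AddMonoidAlgebra.ofCoeff (Finsupp.filter (fun i => Even i) g.coeff), ?_⟩
    rw [hT2]
    ext i
    rw [prod_apply, AddMonoidAlgebra.coeff_ofCoeff]
    by_cases hi : Even i
    · have h1 : Even (i - 2 * c) := by
        obtain ⟨r, hr⟩ := hi; exact ⟨r - c, by omega⟩
      rw [Finsupp.filter_apply_pos _ _ h1, Finsupp.filter_apply_pos _ _ hi]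
      have hoc : ¬ Even (i - c) := by
        intro ⟨r, hr⟩; obtain ⟨s, hs⟩ := hi; omega
      have := hrel (i - c) hoc
      rw [key i, show i - c - c = i - 2 * c by ring] at *
      rw [← this]
    · have h1 : ¬ Even (i - 2 * c) := by
        intro ⟨r, hr⟩; exact hi ⟨r + c, by omega⟩
      rw [Finsupp.filter_apply_neg _ _ h1, Finsupp.filter_apply_neg _ _ hi,
        hz i hi, sub_zero]
  · -- f odd-supported
    have hz : ∀ i : ℤ, Even i → f.coeff i = 0 := by
      intro i hi
      by_contra h0
      have := hf i (Finsupp.mem_support_iff.mpr h0)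
      obtain ⟨r, hr⟩ := hi; obtain ⟨s, hs⟩ := this; omega
    have hrel : ∀ i : ℤ, Even i → g.coeff (i - c) = g.coeff i := by
      intro i hi
      have := key i
      rw [hz i hi] at this
      exact sub_eq_zero.mp this.symm
    refine ⟨AddMonoidAlgebra.ofCoeff (Finsupp.filter (fun i => Odd i) g.coeff), ?_⟩
    rw [hT2]
    ext i
    rw [prod_apply, AddMonoidAlgebra.coeff_ofCoeff]
    by_cases hi : Even i
    · have h1 : Even (i - 2 * c) := by
        obtain ⟨r, hr⟩ := hi; exact ⟨r - c, by omega⟩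
      rw [Finsupp.filter_apply_neg _ _ (Int.not_odd_iff_even.mpr h1),
        Finsupp.filter_apply_neg _ _ (Int.not_odd_iff_even.mpr hi), hz i hi, sub_zero]
    · have h1 : ¬ Even (i - 2 * c) := by
        intro ⟨r, hr⟩; exact hi ⟨r + c, by omega⟩
      rw [Finsupp.filter_apply_pos _ _ (Int.not_even_iff_odd.mp h1),
        Finsupp.filter_apply_pos _ _ (Int.not_even_iff_odd.mp hi)]
      have hec : Even (i - c) := by
        rcases Int.even_or_odd i with he | ⟨r, hr⟩
        · exact absurd he hi
        · exact ⟨r - k, by omega⟩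
      have := hrel (i - c) hec
      rw [key i, show i - c - c = i - 2 * c by ring] at *
      rw [← this]
end
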